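/- Let x ∈ gl(n,ℂ) with upper-left (n-1)×(n-1) submatrix x_{n-1}. If x and x_{n-1} have no common eigenvalue, then the centralizer of x_{n-1} in gl(n-1,ℂ) (embedded as the upper-left block of gl(n,ℂ)) intersects the centralizer of x in gl(n,ℂ) only in 0. -/
import Mathlib


/-- The embedding of `gl(n,ℂ)` into `gl(n+1,ℂ)` as the upper-left corner. -/
def cornerEmbed (n : ℕ) (Y : Matrix (Fin n) (Fin n) ℂ) :
    Matrix (Fin (n + 1)) (Fin (n + 1)) ℂ := fun i j =>
  if h : (i : ℕ) < n ∧ (j : ℕ) < n then Y ⟨i, h.1⟩ ⟨j, h.2⟩ else 0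

lemma cornerEmbed_castSucc (n : ℕ) (Y : Matrix (Fin n) (Fin n) ℂ) (i j : Fin n) :
    cornerEmbed n Y i.castSucc j.castSucc = Y i j := by
  simp [cornerEmbed, i.isLt, j.isLt]

lemma cornerEmbed_last_left (n : ℕ) (Y : Matrix (Fin n) (Fin n) ℂ) (j : Fin (n + 1)) :
    cornerEmbed n Y (Fin.last n) j = 0 := by
  simp [cornerEmbed]

lemma cornerEmbed_last_right (n : ℕ) (Y : Matrix (Fin n) (Fin n) ℂ) (i : Fin (n + 1)) :
    cornerEmbed n Y i (Fin.last n) = 0 := by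
  simp [cornerEmbed]

lemma matrix_spectrum_eq (m : ℕ) (M : Matrix (Fin m) (Fin m) ℂ) :
    spectrum ℂ M = spectrum ℂ (Matrix.mulVecLin M) := by
  have h1 : (Matrix.toLinAlgEquiv' M : Module.End ℂ (Fin m → ℂ)) = Matrix.mulVecLin M :=
    LinearMap.ext fun v => by
      rw [Matrix.toLinAlgEquiv'_apply, Matrix.mulVecLin_apply]
  rw [← AlgEquiv.spectrum_eq (Matrix.toLinAlgEquiv' (n := Fin m) (R := ℂ)) M, h1]

/-- **(Theorem 4.13 for `gl(n,ℂ)`.)**  Let `x ∈ gl(n+1,ℂ)` with upper-left `n × n`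
submatrix `x_n`.  If `x` and `x_n` have no common eigenvalue, then the centralizer
of `x_n` in `gl(n,ℂ)` (embedded as the upper-left block) intersects the centralizer
of `x` in `gl(n+1,ℂ)` only in `0`. -/
theorem stmt11 (n : ℕ) (x : Matrix (Fin (n + 1)) (Fin (n + 1)) ℂ)
    (hspec : spectrum ℂ x ∩
      spectrum ℂ (x.submatrix (Fin.castSucc : Fin n → Fin (n + 1)) Fin.castSucc) = ∅) :
    ∀ Y : Matrix (Fin n) (Fin n) ℂ,
      Y * x.submatrix (Fin.castSucc : Fin n → Fin (n + 1)) Fin.castSucc =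
        x.submatrix (Fin.castSucc : Fin n → Fin (n + 1)) Fin.castSucc * Y →
      cornerEmbed n Y * x = x * cornerEmbed n Y → Y = 0 := by
  intro Y hYA hYx
  set A := x.submatrix (Fin.castSucc : Fin n → Fin (n + 1)) Fin.castSucc with hA
  by_contra hY0
  -- the bottom row condition: c ∘ Y = 0
  have hcY : Matrix.vecMul (fun k => x (Fin.last n) k.castSucc) Y = 0 := by
    funext j
    have h := congrFun (congrFun hYx (Fin.last n)) j.castSucc
    have hL : (cornerEmbed n Y * x) (Fin.last n) j.castSucc = 0 := by
      simp [Matrix.mul_apply, cornerEmbed_last_left]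
    have hR : (x * cornerEmbed n Y) (Fin.last n) j.castSucc =
        ∑ k : Fin n, x (Fin.last n) k.castSucc * Y k j := by
      rw [Matrix.mul_apply, Fin.sum_univ_castSucc]
      simp [cornerEmbed_castSucc, cornerEmbed_last_left]
    rw [hL] at h
    rw [hR] at h
    simpa [Matrix.vecMul, dotProduct] using h.symm
  -- the range of Y is A-invariant
  set p : Submodule ℂ (Fin n → ℂ) := LinearMap.range (Matrix.mulVecLin Y) with hp
  have hinv : ∀ v ∈ p, Matrix.mulVecLin A v ∈ p := by
    rintro v ⟨u, rfl⟩
    refine ⟨A.mulVec u, ?_⟩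
    simp only [Matrix.mulVecLin_apply, Matrix.mulVec_mulVec]
    rw [hYA]
  have hpne : p ≠ ⊥ := by
    intro hbot
    apply hY0
    ext i j
    have : Y.mulVecLin (Pi.single j 1) ∈ p := ⟨Pi.single j 1, rfl⟩
    rw [hbot] at this
    simp only [Submodule.mem_bot, Matrix.mulVecLin_apply, Matrix.mulVec_single] at this
    have := congrFun this i
    simpa using this
  have : Nontrivial p := Submodule.nontrivial_iff_ne_bot.mpr hpne
  -- restrict A to the range of Y and find an eigenvector
  set f : Module.End ℂ p := (Matrix.mulVecLin A).restrict hinv with hf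
  obtain ⟨μ, hμ⟩ := Module.End.exists_eigenvalue f
  obtain ⟨w, hw⟩ := hμ.exists_hasEigenvector
  have hwA : A.mulVec (w : Fin n → ℂ) = μ • (w : Fin n → ℂ) := by
    have := hw.apply_eq_smul
    have h2 := congrArg (Subtype.val) this
    simpa [hf, LinearMap.restrict_apply] using h2
  have hwne : (w : Fin n → ℂ) ≠ 0 := by
    intro h
    exact hw.2 (Subtype.ext h)
  -- μ is an eigenvalue of A
  have hμA : μ ∈ spectrum ℂ A := by
    rw [matrix_spectrum_eq]
    rw [← Module.End.hasEigenvalue_iff_mem_spectrum]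
    exact Module.End.hasEigenvalue_of_hasEigenvector
      ⟨Module.End.mem_eigenspace_iff.mpr (by simpa using hwA), hwne⟩
  -- build the eigenvector of x
  set wv : Fin (n + 1) → ℂ := Fin.snoc (w : Fin n → ℂ) 0 with hwv
  have hcw : ∑ k : Fin n, x (Fin.last n) k.castSucc * (w : Fin n → ℂ) k = 0 := by
    obtain ⟨u, hu⟩ := w.2
    have : ∑ k : Fin n, x (Fin.last n) k.castSucc * (w : Fin n → ℂ) k =
        dotProduct (fun k => x (Fin.last n) k.castSucc) (Y.mulVec u) := by
      rw [← hu]; simp [dotProduct]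
    rw [this, Matrix.dotProduct_mulVec, hcY]
    simp
  have hxwv : x.mulVec wv = μ • wv := by
    funext i
    refine Fin.lastCases ?_ ?_ i
    · rw [Matrix.mulVec, dotProduct, Fin.sum_univ_castSucc]
      simp only [hwv, Fin.snoc_castSucc, Fin.snoc_last, mul_zero, add_zero]
      rw [hcw]
      simp
    · intro j
      rw [Matrix.mulVec, dotProduct, Fin.sum_univ_castSucc]
      simp only [hwv, Fin.snoc_castSucc, Fin.snoc_last, mul_zero, add_zero]
      have := congrFun hwA j
      simp only [Matrix.mulVec, dotProduct, hA, Matrix.submatrix_apply] at this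
      rw [this]
      simp
  have hwvne : wv ≠ 0 := by
    intro h
    apply hwne
    funext j
    have := congrFun h j.castSucc
    simpa [hwv] using this
  have hμx : μ ∈ spectrum ℂ x := by
    rw [matrix_spectrum_eq]
    rw [← Module.End.hasEigenvalue_iff_mem_spectrum]
    exact Module.End.hasEigenvalue_of_hasEigenvector
      ⟨Module.End.mem_eigenspace_iff.mpr (by simpa using hxwv), hwvne⟩
  have : μ ∈ spectrum ℂ x ∩ spectrum ℂ A := ⟨hμx, hμA⟩
  rw [hspec] at this
  exact this
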